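/- For all integers n and k, the coefficient of z^1 in the formal Laurent series (z^{−1}|σ^k α)^{n−k−1} ∈ R((z)) equals 1 if n = k and equals 0 if n ≠ k. (Equivalently, in the notation of formal contour integrals, ∮ (z^{−1}|σ^k α)^{n−k−1} dz/(2πi z²) = δ_{nk}.) -/

import Mathlib

variable {R : Type*} [CommRing R]

/-- The shifted power `(z⁻¹|α)^k` in the ring of formal Laurent series `R((z))`:
`∏_{i=1}^{k} (z⁻¹ − α_i)` for `k ≥ 0`, and `∏_{i=k+1}^{0} (z⁻¹ − α_i)⁻¹` for `k < 0`
(each factor `z⁻¹ − α_i = z⁻¹(1 − α_i z)` is a unit, so `Ring.inverse` gives its inverse). -/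
noncomputable def spow (α : ℤ → R) (k : ℤ) : LaurentSeries R :=
  if 0 ≤ k then
    ∏ i ∈ Finset.Icc 1 k, (HahnSeries.single (-1 : ℤ) (1 : R) - HahnSeries.C (α i))
  else
    ∏ i ∈ Finset.Icc (k + 1) 0,
      Ring.inverse (HahnSeries.single (-1 : ℤ) (1 : R) - HahnSeries.C (α i))

open PowerSeries HahnSeries

lemma geom_inv (a : R) :
    (HahnSeries.single (-1 : ℤ) (1 : R) - HahnSeries.C a) *
      (HahnSeries.ofPowerSeries ℤ R (PowerSeries.X * PowerSeries.mk (a ^ ·))) = 1 := by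
  have h1 : (1 - PowerSeries.C a * PowerSeries.X) * PowerSeries.mk (a ^ ·) = 1 := by
    ext n
    cases n with
    | zero => simp [PowerSeries.coeff_zero_eq_constantCoeff]
    | succ n =>
        rw [sub_mul, one_mul, mul_assoc, map_sub, PowerSeries.coeff_C_mul,
          PowerSeries.coeff_succ_X_mul]
        simp [pow_succ, mul_comm]
  have hs : (HahnSeries.single (-1 : ℤ) (1 : R) - HahnSeries.C a) *
      HahnSeries.single (1 : ℤ) (1 : R) = 1 - HahnSeries.C a * HahnSeries.single 1 1 := by
    rw [sub_mul, HahnSeries.single_mul_single]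
    norm_num
  calc (HahnSeries.single (-1 : ℤ) (1 : R) - HahnSeries.C a) *
      (HahnSeries.ofPowerSeries ℤ R (PowerSeries.X * PowerSeries.mk (a ^ ·)))
      = ((HahnSeries.single (-1 : ℤ) (1 : R) - HahnSeries.C a) * HahnSeries.single 1 1) *
        HahnSeries.ofPowerSeries ℤ R (PowerSeries.mk (a ^ ·)) := by
        rw [map_mul, HahnSeries.ofPowerSeries_X, mul_assoc]
    _ = HahnSeries.ofPowerSeries ℤ R ((1 - PowerSeries.C a * PowerSeries.X) *
          PowerSeries.mk (a ^ ·)) := by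
        rw [hs]
        simp only [map_mul, map_sub, map_one, HahnSeries.ofPowerSeries_C,
          HahnSeries.ofPowerSeries_X]
    _ = 1 := by rw [h1, map_one]

lemma rinv_eq (a : R) :
    Ring.inverse (HahnSeries.single (-1 : ℤ) (1 : R) - HahnSeries.C a) =
      HahnSeries.ofPowerSeries ℤ R (PowerSeries.X * PowerSeries.mk (a ^ ·)) := by
  have h := geom_inv a
  have hu : IsUnit (HahnSeries.single (-1 : ℤ) (1 : R) - HahnSeries.C a) :=
    IsUnit.of_mul_eq_one _ h
  calc Ring.inverse (HahnSeries.single (-1 : ℤ) (1 : R) - HahnSeries.C a)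
      = Ring.inverse _ * (_ * HahnSeries.ofPowerSeries ℤ R (PowerSeries.X * PowerSeries.mk (a ^ ·))) := by rw [h, mul_one]
    _ = _ := by rw [← mul_assoc, Ring.inverse_mul_cancel _ hu, one_mul]

lemma coeff_prod_pos_zero (β : ℤ → R) (s : Finset ℤ) (j : ℤ) (hj : 0 < j) :
    (∏ i ∈ s, (HahnSeries.single (-1 : ℤ) (1 : R) - HahnSeries.C (β i))).coeff j = 0 := by
  have key : (∀ j : ℤ, 0 < j →
      (∏ i ∈ s, (HahnSeries.single (-1 : ℤ) (1 : R) - HahnSeries.C (β i))).coeff j = 0) := by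
    refine Finset.prod_induction _ (fun x : LaurentSeries R => ∀ j : ℤ, 0 < j → x.coeff j = 0) ?_ ?_ ?_
    · intro x y hx hy j hj
      by_contra h
      have hmem : j ∈ (x * y).support := h
      obtain ⟨a, ha, b, hb, hab⟩ := HahnSeries.support_mul_subset hmem
      have ha0 : a ≤ 0 := by by_contra hc; exact ha (hx a (by omega))
      have hb0 : b ≤ 0 := by by_contra hc; exact hb (hy b (by omega))
      have hab' : a + b = j := hab
      omega
    · intro j hj
      rw [HahnSeries.coeff_one, if_neg (by omega)]
    · intro i _ j hj
      rw [HahnSeries.coeff_sub, HahnSeries.C_apply, HahnSeries.coeff_single,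
        HahnSeries.coeff_single, if_neg (by omega), if_neg (by omega), sub_zero]
  exact key j hj

lemma coeff_spow (β : ℤ → R) (m : ℤ) :
    (spow β m).coeff 1 = if m = -1 then 1 else 0 := by
  unfold spow
  rcases le_or_gt 0 m with hm | hm
  · rw [if_pos hm, if_neg (by omega)]
    exact coeff_prod_pos_zero β _ 1 one_pos
  · rw [if_neg (by omega)]
    simp_rw [rinv_eq]
    rw [← map_prod]
    have h := HahnSeries.ofPowerSeries_apply_coeff (Γ := ℤ) (R := R)
      (∏ i ∈ Finset.Icc (m + 1) 0, PowerSeries.X * PowerSeries.mk ((β i) ^ ·)) 1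
    rw [Nat.cast_one] at h
    rw [h]
    rcases eq_or_ne m (-1) with rfl | hne
    · rw [if_pos rfl]
      norm_num [Finset.Icc_self, PowerSeries.coeff_succ_X_mul]
    · rw [if_neg hne]
      -- m ≤ -2, card ≥ 2, so X^2 divides the product
      have hcard : 2 ≤ (Finset.Icc (m + 1) 0).card := by
        rw [Int.card_Icc]
        omega
      have hdvd : (PowerSeries.X : PowerSeries R) ^ 2 ∣
          ∏ i ∈ Finset.Icc (m + 1) 0, PowerSeries.X * PowerSeries.mk ((β i) ^ ·) := by
        have h1 : (PowerSeries.X : PowerSeries R) ^ (Finset.Icc (m + 1) 0).card ∣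
            ∏ i ∈ Finset.Icc (m + 1) 0, PowerSeries.X * PowerSeries.mk ((β i) ^ ·) := by
          rw [← Finset.prod_const]
          exact Finset.prod_dvd_prod_of_dvd _ _ (fun i _ => Dvd.intro _ rfl)
        exact dvd_trans (pow_dvd_pow _ hcard) h1
      obtain ⟨Q, hQ⟩ := hdvd
      rw [hQ, pow_two, mul_assoc, PowerSeries.coeff_succ_X_mul,
        PowerSeries.coeff_zero_eq_constantCoeff, map_mul, PowerSeries.constantCoeff_X, zero_mul]

/-- Proposition 2.3 (orthonormality): the coefficient of `z^1` in `(z⁻¹|σ^k α)^{n−k−1}`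
equals `δ_{nk}`, i.e. `∮ (z⁻¹|σ^k α)^{n−k−1} dz/(2πi z²) = δ_{nk}`.
Here `(σ^k α)_i = α_{i+k}`. -/
theorem shifted_power_orthonormality (α : ℤ → R) (n k : ℤ) :
    (spow (fun i => α (i + k)) (n - k - 1)).coeff 1 = if n = k then 1 else 0 := by
  rw [coeff_spow]
  have : (n - k - 1 = -1) ↔ (n = k) := by omega
  simp [this]
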